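/- Let p > 1, q := p/(p−1), and C₁ > 0. Let φ be a Young–Orlicz function on R (d = 1) such that φ(λ) ≤ C₁|λ|^p for all |λ| > 1. Then there exists a finite constant C₂ depending only on p, C₁ and sup_{|λ| ≤ 1} φ(λ) such that every centered real random variable ξ with ‖ξ‖B(φ) < ∞ satisfies ( E|ξ|^r )^{1/r} ≤ C₂ · r^{1/q} · ‖ξ‖B(φ) for every r ≥ 1. -/

import Mathlib

open MeasureTheory Real ENNReal

/-- A one-dimensional Young–Orlicz function: even, convex, nonnegative, twice
continuously differentiable, vanishing exactly at `0`, with `g''(0) > 0` and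
`|g'(x)| → ∞` as `|x| → ∞`. -/
structure IsYoungOrlicz1 (g : ℝ → ℝ) : Prop where
  even : ∀ x, g (-x) = g x
  convex : ConvexOn ℝ Set.univ g
  nonneg : ∀ x, 0 ≤ g x
  smooth : ContDiff ℝ 2 g
  zero_iff : ∀ x, g x = 0 ↔ x = 0
  second_deriv_pos : 0 < iteratedDeriv 2 g 0
  deriv_tendsto : Filter.Tendsto (fun x => |deriv g x|)
    (Filter.cocompact ℝ) Filter.atTop

/-- Pointwise bound: `t^r ≤ (r/λ)^r e^{λ t}` for `t ≥ 0`. -/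
lemma aux_rpow_le_exp (lam t r : ℝ) (hlam : 0 < lam) (ht : 0 ≤ t) (hr : 1 ≤ r) :
    t ^ r ≤ (r / lam) ^ r * Real.exp (lam * t) := by
  have hr0 : 0 < r := lt_of_lt_of_le one_pos hr
  have hs : 0 ≤ lam * t := mul_nonneg hlam.le ht
  have h1 : lam * t / r ≤ Real.exp (lam * t / r) :=
    le_trans (by linarith) (Real.add_one_le_exp _)
  have h2 : (lam * t / r) ^ r ≤ (Real.exp (lam * t / r)) ^ r :=
    Real.rpow_le_rpow (by positivity) h1 hr0.le
  have h3 : (Real.exp (lam * t / r)) ^ r = Real.exp (lam * t) := by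
    rw [← Real.exp_one_rpow (lam * t / r), ← Real.rpow_mul (Real.exp_pos 1).le,
      div_mul_cancel₀ _ hr0.ne', Real.exp_one_rpow]
  have h4 : t ^ r = (r / lam) ^ r * (lam * t / r) ^ r := by
    rw [← Real.mul_rpow (by positivity) (by positivity)]
    congr 1
    field_simp
  rw [h4]
  exact mul_le_mul_of_nonneg_left (h2.trans_eq h3) (by positivity)

theorem stmt15 (p : ℝ) (hp : 1 < p) (q : ℝ) (hq : q = p / (p - 1))
    (C₁ : ℝ) (hC₁ : 0 < C₁) (M : ℝ) (hM : 0 ≤ M) :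
    ∃ C₂ : ℝ, 0 < C₂ ∧
      ∀ φ : ℝ → ℝ, IsYoungOrlicz1 φ →
        (∀ l : ℝ, 1 < |l| → φ l ≤ C₁ * |l| ^ p) →
        (∀ l : ℝ, |l| ≤ 1 → φ l ≤ M) →
        ∀ (Ω : Type) (mΩ : MeasurableSpace Ω) (μ : Measure Ω),
          IsProbabilityMeasure μ → ∀ ξ : Ω → ℝ, Measurable ξ →
          Integrable ξ μ → (∫ ω, ξ ω ∂μ) = 0 →
          ∀ τ : ℝ, 0 < τ →
          (∀ l : ℝ, ∫⁻ ω, ENNReal.ofReal (Real.exp (l * ξ ω)) ∂μ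
              ≤ ENNReal.ofReal (Real.exp (φ (τ * l)))) →
          ∀ r : ℝ, 1 ≤ r →
            (∫⁻ ω, ENNReal.ofReal (|ξ ω| ^ r) ∂μ) ^ (1 / r)
              ≤ ENNReal.ofReal (C₂ * r ^ (1 / q) * τ) := by
  refine ⟨2 * Real.exp (M + 1) * C₁ ^ (1 / p), by positivity, ?_⟩
  intro φ hφ hφ1 hφM Ω mΩ μ hμ ξ hξ hInt hmean τ hτ hmgf r hr
  have hr0 : 0 < r := lt_of_lt_of_le one_pos hr
  have hp0 : 0 < p := lt_trans one_pos hp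
  set m : ℝ := max 1 ((r / C₁) ^ (1 / p)) with hm
  have hm1 : (1:ℝ) ≤ m := le_max_left _ _
  have hmpos : 0 < m := lt_of_lt_of_le one_pos hm1
  set lam : ℝ := m / τ with hlam
  have hlampos : 0 < lam := div_pos hmpos hτ
  have hτlam : τ * lam = m := by
    rw [hlam]
    field_simp
  -- φ bound at m
  have hφb : φ m ≤ M + r := by
    rcases le_or_gt ((r / C₁) ^ (1 / p)) 1 with h | h
    · have hmeq : m = 1 := max_eq_left h
      have := hφM 1 (by norm_num)
      rw [hmeq]
      linarith
    · have hmeq : m = (r / C₁) ^ (1 / p) := max_eq_right h.le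
      have habs : |m| = m := abs_of_pos hmpos
      have h1 : φ m ≤ C₁ * |m| ^ p := hφ1 m (by rw [habs, hmeq]; exact h)
      have h2 : (((r / C₁) ^ (1 / p)) : ℝ) ^ p = r / C₁ := by
        rw [← Real.rpow_mul (by positivity), one_div_mul_cancel hp0.ne',
          Real.rpow_one]
      have h3 : C₁ * |m| ^ p = r := by
        rw [habs, hmeq, h2]
        field_simp
      linarith
  -- pointwise bound
  have hpt : ∀ ω, ENNReal.ofReal (|ξ ω| ^ r) ≤
      ENNReal.ofReal ((r / lam) ^ r) *
        (ENNReal.ofReal (Real.exp (lam * ξ ω)) +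
          ENNReal.ofReal (Real.exp (-lam * ξ ω))) := by
    intro ω
    have h1 : |ξ ω| ^ r ≤ (r / lam) ^ r * Real.exp (lam * |ξ ω|) :=
      aux_rpow_le_exp lam _ r hlampos (abs_nonneg _) hr
    have h2 : Real.exp (lam * |ξ ω|) ≤
        Real.exp (lam * ξ ω) + Real.exp (-lam * ξ ω) := by
      rcases le_total 0 (ξ ω) with hx | hx
      · rw [abs_of_nonneg hx]
        nlinarith [Real.exp_pos (-lam * ξ ω)]
      · rw [abs_of_nonpos hx]
        have : lam * -ξ ω = -lam * ξ ω := by ring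
        rw [this]
        nlinarith [Real.exp_pos (lam * ξ ω)]
    calc ENNReal.ofReal (|ξ ω| ^ r)
        ≤ ENNReal.ofReal ((r / lam) ^ r *
            (Real.exp (lam * ξ ω) + Real.exp (-lam * ξ ω))) := by
          apply ENNReal.ofReal_le_ofReal
          calc |ξ ω| ^ r ≤ (r / lam) ^ r * Real.exp (lam * |ξ ω|) := h1
            _ ≤ _ := mul_le_mul_of_nonneg_left h2 (by positivity)
      _ = _ := by
          rw [ENNReal.ofReal_mul (by positivity),
            ENNReal.ofReal_add (Real.exp_pos _).le (Real.exp_pos _).le]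
  -- integral bound
  have hmeas1 : Measurable fun ω => ENNReal.ofReal (Real.exp (lam * ξ ω)) :=
    (Real.measurable_exp.comp (hξ.const_mul lam)).ennreal_ofReal
  have hmeas2 : Measurable fun ω => ENNReal.ofReal (Real.exp (-lam * ξ ω)) :=
    (Real.measurable_exp.comp (hξ.const_mul (-lam))).ennreal_ofReal
  have hφeven : φ (τ * -lam) = φ m := by
    rw [show τ * -lam = -(τ * lam) by ring, hφ.even, hτlam]
  have hint : (∫⁻ ω, ENNReal.ofReal (|ξ ω| ^ r) ∂μ) ≤
      ENNReal.ofReal ((r / lam) ^ r * (2 * Real.exp (φ m))) := by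
    calc (∫⁻ ω, ENNReal.ofReal (|ξ ω| ^ r) ∂μ)
        ≤ ∫⁻ ω, ENNReal.ofReal ((r / lam) ^ r) *
            (ENNReal.ofReal (Real.exp (lam * ξ ω)) +
              ENNReal.ofReal (Real.exp (-lam * ξ ω))) ∂μ :=
          lintegral_mono hpt
      _ = ENNReal.ofReal ((r / lam) ^ r) *
            ((∫⁻ ω, ENNReal.ofReal (Real.exp (lam * ξ ω)) ∂μ) +
              ∫⁻ ω, ENNReal.ofReal (Real.exp (-lam * ξ ω)) ∂μ) := by
          rw [lintegral_const_mul' _ _ ENNReal.ofReal_ne_top,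
            lintegral_add_left hmeas1]
      _ ≤ ENNReal.ofReal ((r / lam) ^ r) *
            (ENNReal.ofReal (Real.exp (φ m)) + ENNReal.ofReal (Real.exp (φ m))) := by
          apply mul_le_mul_right
          apply add_le_add
          · have := hmgf lam
            rwa [hτlam] at this
          · have := hmgf (-lam)
            rwa [hφeven] at this
      _ = ENNReal.ofReal ((r / lam) ^ r * (2 * Real.exp (φ m))) := by
          rw [← ENNReal.ofReal_add (Real.exp_pos _).le (Real.exp_pos _).le,
            ← ENNReal.ofReal_mul (by positivity)]
          ring_nf
  -- real-side final inequality
  have hq0 : 1 / q = 1 - 1 / p := by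
    rw [hq]
    field_simp
  have hrsplit : r = r ^ (1 / p) * r ^ (1 / q) := by
    rw [← Real.rpow_add hr0, hq0]
    norm_num
  have hkey : r / m ≤ C₁ ^ (1 / p) * r ^ (1 / q) := by
    rcases le_or_gt ((r / C₁) ^ (1 / p)) 1 with h | h
    · have hmeq : m = 1 := max_eq_left h
      have hrC : r ≤ C₁ := by
        by_contra hc
        push_neg at hc
        have h1 : (1:ℝ) < r / C₁ := (one_lt_div hC₁).mpr hc
        have : (1:ℝ) < (r / C₁) ^ (1 / p) :=
          (Real.one_lt_rpow_iff_of_pos (by positivity)).mpr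
            (Or.inl ⟨h1, by positivity⟩)
        linarith
      have h1 : r ^ (1 / p) ≤ C₁ ^ (1 / p) :=
        Real.rpow_le_rpow hr0.le hrC (by positivity)
      rw [hmeq, div_one]
      calc r = r ^ (1 / p) * r ^ (1 / q) := hrsplit
        _ ≤ C₁ ^ (1 / p) * r ^ (1 / q) :=
            mul_le_mul_of_nonneg_right h1 (by positivity)
    · have hmeq : m = (r / C₁) ^ (1 / p) := max_eq_right h.le
      have hdiv : (r / C₁) ^ (1 / p) = r ^ (1 / p) / C₁ ^ (1 / p) :=
        Real.div_rpow hr0.le hC₁.le _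
      have hrp : (0:ℝ) < r ^ (1 / p) := Real.rpow_pos_of_pos hr0 _
      have hCp : (0:ℝ) < C₁ ^ (1 / p) := Real.rpow_pos_of_pos hC₁ _
      have heq : r / (r ^ (1 / p) / C₁ ^ (1 / p)) = C₁ ^ (1 / p) * r ^ (1 / q) := by
        field_simp
        linear_combination hrsplit
      rw [hmeq, hdiv, heq]
  -- combine
  set A : ℝ := (r / lam) ^ r * (2 * Real.exp (φ m)) with hA
  have hApos : 0 < A := by positivity
  have hAroot : A ^ (1 / r) ≤ 2 * Real.exp (M + 1) * C₁ ^ (1 / p) * r ^ (1 / q) * τ := by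
    have h1 : ((r / lam) ^ r) ^ (1 / r) = r / lam := by
      rw [← Real.rpow_mul (by positivity), mul_one_div_cancel hr0.ne',
        Real.rpow_one]
    have h2 : A ^ (1 / r) = (r / lam) * (2 * Real.exp (φ m)) ^ (1 / r) := by
      rw [hA, Real.mul_rpow (by positivity) (by positivity), h1]
    have h3 : (2 * Real.exp (φ m)) ^ (1 / r) ≤ 2 * Real.exp (M + 1) := by
      rw [Real.mul_rpow (by norm_num) (Real.exp_pos _).le]
      have h31 : (2:ℝ) ^ (1 / r) ≤ 2 := by
        calc (2:ℝ) ^ (1 / r) ≤ 2 ^ (1:ℝ) :=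
            Real.rpow_le_rpow_of_exponent_le one_le_two (by
              rw [div_le_one hr0]; exact hr)
          _ = 2 := Real.rpow_one 2
      have h32 : (Real.exp (φ m)) ^ (1 / r) ≤ Real.exp (M + 1) := by
        rw [← Real.exp_one_rpow (φ m), ← Real.rpow_mul (Real.exp_pos 1).le,
          Real.exp_one_rpow]
        apply Real.exp_le_exp.mpr
        have : φ m * (1 / r) ≤ (M + r) / r := by
          rw [mul_one_div]
          gcongr
        calc φ m * (1 / r) ≤ (M + r) / r := this
          _ = M / r + 1 := by field_simp
          _ ≤ M + 1 := by
              have : M / r ≤ M := by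
                rw [div_le_iff₀ hr0]
                nlinarith
              linarith
      exact mul_le_mul h31 h32 (by positivity) (by norm_num)
    have h4 : r / lam = τ * (r / m) := by
      rw [hlam]
      field_simp
    have h5 : r / lam ≤ τ * (C₁ ^ (1 / p) * r ^ (1 / q)) := by
      rw [h4]
      exact mul_le_mul_of_nonneg_left hkey hτ.le
    calc A ^ (1 / r) = (r / lam) * (2 * Real.exp (φ m)) ^ (1 / r) := h2
      _ ≤ (τ * (C₁ ^ (1 / p) * r ^ (1 / q))) * (2 * Real.exp (M + 1)) := by
          apply mul_le_mul h5 h3 (by positivity) (by positivity)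
      _ = 2 * Real.exp (M + 1) * C₁ ^ (1 / p) * r ^ (1 / q) * τ := by ring
  calc (∫⁻ ω, ENNReal.ofReal (|ξ ω| ^ r) ∂μ) ^ (1 / r)
      ≤ (ENNReal.ofReal A) ^ (1 / r) :=
        ENNReal.rpow_le_rpow hint (by positivity)
    _ = ENNReal.ofReal (A ^ (1 / r)) := by
        rw [← ENNReal.ofReal_rpow_of_nonneg hApos.le (by positivity)]
    _ ≤ ENNReal.ofReal (2 * Real.exp (M + 1) * C₁ ^ (1 / p) * r ^ (1 / q) * τ) :=
        ENNReal.ofReal_le_ofReal hAroot
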